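/- Let A = K[x,y]/(x², y²) with maximal ideal m = (x, y), and let W ⊆ m be a 2-dimensional K-linear subspace that generates A as a unital K-algebra. Then there exists a K-algebra automorphism φ of A such that φ(W) = span_K{x, y}. -/

import Mathlib

/-- The algebra `K[x,y]/(x², y²)`. -/
abbrev SqZero (K : Type*) [Field K] : Type _ :=
  MvPolynomial (Fin 2) K ⧸ Ideal.span
    {(MvPolynomial.X 0 : MvPolynomial (Fin 2) K) ^ 2,
      (MvPolynomial.X 1 : MvPolynomial (Fin 2) K) ^ 2}

/-- The image of `x` in `K[x,y]/(x², y²)`. -/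
noncomputable abbrev sqX (K : Type*) [Field K] : SqZero K :=
  Ideal.Quotient.mk _ (MvPolynomial.X 0)

/-- The image of `y` in `K[x,y]/(x², y²)`. -/
noncomputable abbrev sqY (K : Type*) [Field K] : SqZero K :=
  Ideal.Quotient.mk _ (MvPolynomial.X 1)

namespace P15

variable (K : Type*) [Field K]

set_option synthInstance.maxHeartbeats 1000000
set_option maxHeartbeats 4000000
set_option maxRecDepth 8000

lemma sq_x : sqX K * sqX K = 0 := by
  rw [← sq, sqX, ← map_pow, Ideal.Quotient.eq_zero_iff_mem]
  exact Ideal.subset_span (Or.inl rfl)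

lemma sq_y : sqY K * sqY K = 0 := by
  rw [← sq, sqY, ← map_pow, Ideal.Quotient.eq_zero_iff_mem]
  exact Ideal.subset_span (Or.inr rfl)

lemma x_mul_xy : sqX K * (sqX K * sqY K) = 0 := by
  rw [← mul_assoc, sq_x, zero_mul]

lemma xy_mul_y : (sqX K * sqY K) * sqY K = 0 := by
  rw [mul_assoc, sq_y, mul_zero]

lemma xy_mul_xy : (sqX K * sqY K) * (sqX K * sqY K) = 0 := by
  have : (sqX K * sqY K) * (sqX K * sqY K) = sqX K * sqX K * (sqY K * sqY K) := by ring
  rw [this, sq_x, zero_mul]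

/-- Lift an algebra hom out of `SqZero` given images with square zero. -/
noncomputable def mkHom {A : Type*} [CommRing A] [Algebra K A] (a b : A)
    (ha : a * a = 0) (hb : b * b = 0) : SqZero K →ₐ[K] A :=
  Ideal.Quotient.liftₐ _ (MvPolynomial.aeval ![a, b]) (by
    intro p hp
    refine Submodule.span_induction ?_ ?_ ?_ ?_ hp
    · rintro q (rfl | rfl) <;> simp [sq, ha, hb]
    · simp
    · intro x y _ _ hx hy; simp [hx, hy]
    · intro x y _ hy; simp [smul_eq_mul, hy])

@[simp] lemma mkHom_x {A : Type*} [CommRing A] [Algebra K A] (a b : A)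
    (ha : a * a = 0) (hb : b * b = 0) : mkHom K a b ha hb (sqX K) = a := by
  simp [mkHom, sqX]
  erw [Ideal.Quotient.lift_mk]
  simp

@[simp] lemma mkHom_y {A : Type*} [CommRing A] [Algebra K A] (a b : A)
    (ha : a * a = 0) (hb : b * b = 0) : mkHom K a b ha hb (sqY K) = b := by
  simp [mkHom, sqY]
  erw [Ideal.Quotient.lift_mk]
  simp

open TrivSqZeroExt DualNumber in
lemma indep (a b c d : K)
    (h : a • (1 : SqZero K) + b • sqX K + c • sqY K + d • (sqX K * sqY K) = 0) :
    a = 0 ∧ b = 0 ∧ c = 0 ∧ d = 0 := by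
  have hx : (inr 1 : DualNumber (DualNumber K)) * inr 1 = 0 := by simp
  have hy : (inl eps : DualNumber (DualNumber K)) * inl eps = 0 := by
    rw [← inl_mul]; simp
  set f := mkHom K (inr 1 : DualNumber (DualNumber K)) (inl eps) hx hy with hf
  have hxy : f (sqX K * sqY K) = inr eps := by
    rw [map_mul, mkHom_x, mkHom_y]
    ext <;> simp
  have h0 := congrArg f h
  rw [map_add, map_add, map_add, map_smul, map_smul, map_smul, map_smul, map_one,
    map_zero, mkHom_x, mkHom_y, hxy] at h0
  have h1 := congrArg TrivSqZeroExt.fst h0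
  have h2 := congrArg TrivSqZeroExt.snd h0
  simp at h1 h2
  have h1a := congrArg TrivSqZeroExt.fst h1
  have h1b := congrArg TrivSqZeroExt.snd h1
  have h2a := congrArg TrivSqZeroExt.fst h2
  have h2b := congrArg TrivSqZeroExt.snd h2
  simp only [DualNumber.eps, fst_add, snd_add, fst_smul, snd_smul, fst_inl, snd_inl,
    fst_inr, snd_inr, fst_one, snd_one, fst_zero, snd_zero, smul_zero, smul_eq_mul,
    mul_one, add_zero, zero_add, mul_zero] at h1a h1b h2a h2b
  exact ⟨h1a, h2a, h1b, h2b⟩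

/-- span of the four "monomials" -/
noncomputable def S : Submodule K (SqZero K) :=
  Submodule.span K {1, sqX K, sqY K, sqX K * sqY K}

lemma one_mem_S : (1 : SqZero K) ∈ S K := Submodule.subset_span (by simp)
lemma x_mem_S : sqX K ∈ S K := Submodule.subset_span (by simp)
lemma y_mem_S : sqY K ∈ S K := Submodule.subset_span (by simp)
lemma xy_mem_S : sqX K * sqY K ∈ S K := Submodule.subset_span (by simp)

lemma mul_x_mem {z : SqZero K} (hz : z ∈ S K) : z * sqX K ∈ S K := by
  refine Submodule.span_induction ?_ ?_ ?_ ?_ hz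
  · rintro w (rfl | rfl | rfl | rfl)
    · rw [one_mul]; exact x_mem_S K
    · rw [sq_x]; exact (S K).zero_mem
    · rw [mul_comm]; exact xy_mem_S K
    · have : sqX K * sqY K * sqX K = sqX K * sqX K * sqY K := by ring
      rw [this, sq_x, zero_mul]; exact (S K).zero_mem
  · rw [zero_mul]; exact (S K).zero_mem
  · intro u v _ _ hu hv; rw [add_mul]; exact (S K).add_mem hu hv
  · intro c u _ hu; rw [smul_mul_assoc]; exact (S K).smul_mem c hu

lemma mul_y_mem {z : SqZero K} (hz : z ∈ S K) : z * sqY K ∈ S K := by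
  refine Submodule.span_induction ?_ ?_ ?_ ?_ hz
  · rintro w (rfl | rfl | rfl | rfl)
    · rw [one_mul]; exact y_mem_S K
    · exact xy_mem_S K
    · rw [sq_y]; exact (S K).zero_mem
    · have : sqX K * sqY K * sqY K = sqX K * (sqY K * sqY K) := by ring
      rw [this, sq_y, mul_zero]; exact (S K).zero_mem
  · rw [zero_mul]; exact (S K).zero_mem
  · intro u v _ _ hu hv; rw [add_mul]; exact (S K).add_mem hu hv
  · intro c u _ hu; rw [smul_mul_assoc]; exact (S K).smul_mem c hu

lemma span_top : Submodule.span K {1, sqX K, sqY K, sqX K * sqY K}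
    = (⊤ : Submodule K (SqZero K)) := by
  rw [show Submodule.span K {1, sqX K, sqY K, sqX K * sqY K} = S K from rfl, eq_top_iff]
  rintro z -
  obtain ⟨p, rfl⟩ := Ideal.Quotient.mk_surjective z
  induction p using MvPolynomial.induction_on with
  | C a =>
      have : (Ideal.Quotient.mk _ (MvPolynomial.C a : MvPolynomial (Fin 2) K)) =
        algebraMap K (SqZero K) a := by
        rw [IsScalarTower.algebraMap_apply K (MvPolynomial (Fin 2) K) (SqZero K),
          MvPolynomial.algebraMap_eq]
        rfl
      rw [this, Algebra.algebraMap_eq_smul_one]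
      exact (S K).smul_mem a (one_mem_S K)
  | add p q hp hq => rw [map_add]; exact (S K).add_mem hp hq
  | mul_X p i hp =>
      rw [map_mul]
      fin_cases i
      · exact mul_x_mem K hp
      · exact mul_y_mem K hp

noncomputable def M : Submodule K (SqZero K) :=
  Submodule.span K {sqX K, sqY K, sqX K * sqY K}

noncomputable def J : Submodule K (SqZero K) :=
  Submodule.span K {sqX K * sqY K}

lemma J_le_M : J K ≤ M K :=
  Submodule.span_le.2 (by rintro w rfl; exact Submodule.subset_span (by simp))

lemma x_mul_M {w : SqZero K} (hw : w ∈ M K) : sqX K * w ∈ J K := by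
  refine Submodule.span_induction ?_ ?_ ?_ ?_ hw
  · rintro v (rfl | rfl | rfl)
    · rw [sq_x]; exact (J K).zero_mem
    · exact Submodule.subset_span rfl
    · rw [x_mul_xy]; exact (J K).zero_mem
  · rw [mul_zero]; exact (J K).zero_mem
  · intro u v _ _ hu hv; rw [mul_add]; exact (J K).add_mem hu hv
  · intro c u _ hu; rw [mul_smul_comm]; exact (J K).smul_mem c hu

lemma y_mul_M {w : SqZero K} (hw : w ∈ M K) : sqY K * w ∈ J K := by
  refine Submodule.span_induction ?_ ?_ ?_ ?_ hw
  · rintro v (rfl | rfl | rfl)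
    · rw [mul_comm]; exact Submodule.subset_span rfl
    · rw [sq_y]; exact (J K).zero_mem
    · have : sqY K * (sqX K * sqY K) = sqX K * (sqY K * sqY K) := by ring
      rw [this, sq_y, mul_zero]; exact (J K).zero_mem
  · rw [mul_zero]; exact (J K).zero_mem
  · intro u v _ _ hu hv; rw [mul_add]; exact (J K).add_mem hu hv
  · intro c u _ hu; rw [mul_smul_comm]; exact (J K).smul_mem c hu

lemma xy_mul_M {w : SqZero K} (hw : w ∈ M K) : (sqX K * sqY K) * w = 0 := by
  refine Submodule.span_induction ?_ ?_ ?_ ?_ hw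
  · rintro v (rfl | rfl | rfl)
    · have : sqX K * sqY K * sqX K = sqX K * sqX K * sqY K := by ring
      rw [this, sq_x, zero_mul]
    · exact xy_mul_y K
    · exact xy_mul_xy K
  · rw [mul_zero]
  · intro u v _ _ hu hv; rw [mul_add, hu, hv, add_zero]
  · intro c u _ hu; rw [mul_smul_comm, hu, smul_zero]

lemma M_mul_M {w w' : SqZero K} (hw : w ∈ M K) (hw' : w' ∈ M K) : w * w' ∈ J K := by
  refine Submodule.span_induction ?_ ?_ ?_ ?_ hw
  · rintro v (rfl | rfl | rfl)
    · exact x_mul_M K hw'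
    · exact y_mul_M K hw'
    · rw [xy_mul_M K hw']; exact (J K).zero_mem
  · rw [zero_mul]; exact (J K).zero_mem
  · intro u v _ _ hu hv; rw [add_mul]; exact (J K).add_mem hu hv
  · intro c u _ hu; rw [smul_mul_assoc]; exact (J K).smul_mem c hu

lemma ideal_eq : (Ideal.span {sqX K, sqY K}).restrictScalars K = M K := by
  apply le_antisymm
  · intro a ha
    rw [Submodule.restrictScalars_mem, Ideal.mem_span_pair] at ha
    obtain ⟨p, q, rfl⟩ := ha
    have hp : p ∈ Submodule.span K {1, sqX K, sqY K, sqX K * sqY K} := by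
      rw [span_top]; trivial
    have hq : q ∈ Submodule.span K {1, sqX K, sqY K, sqX K * sqY K} := by
      rw [span_top]; trivial
    have hx : ∀ r ∈ Submodule.span K {1, sqX K, sqY K, sqX K * sqY K}, r * sqX K ∈ M K := by
      intro r hr
      refine Submodule.span_induction ?_ ?_ ?_ ?_ hr
      · rintro v (rfl | rfl | rfl | rfl)
        · rw [one_mul]; exact Submodule.subset_span (by simp)
        · rw [sq_x]; exact (M K).zero_mem
        · rw [mul_comm]; exact Submodule.subset_span (by simp)
        · exact J_le_M K (by rw [mul_comm]; exact x_mul_M K (Submodule.subset_span (by simp)))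
      · rw [zero_mul]; exact (M K).zero_mem
      · intro u v _ _ hu hv; rw [add_mul]; exact (M K).add_mem hu hv
      · intro c u _ hu; rw [smul_mul_assoc]; exact (M K).smul_mem c hu
    have hy : ∀ r ∈ Submodule.span K {1, sqX K, sqY K, sqX K * sqY K}, r * sqY K ∈ M K := by
      intro r hr
      refine Submodule.span_induction ?_ ?_ ?_ ?_ hr
      · rintro v (rfl | rfl | rfl | rfl)
        · rw [one_mul]; exact Submodule.subset_span (by simp)
        · exact Submodule.subset_span (by simp)
        · rw [sq_y]; exact (M K).zero_mem
        · exact J_le_M K (by rw [mul_comm]; exact y_mul_M K (Submodule.subset_span (by simp)))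
      · rw [zero_mul]; exact (M K).zero_mem
      · intro u v _ _ hu hv; rw [add_mul]; exact (M K).add_mem hu hv
      · intro c u _ hu; rw [smul_mul_assoc]; exact (M K).smul_mem c hu
    exact (M K).add_mem (hx p hp) (hy q hq)
  · rw [M, Submodule.span_le]
    rintro v (rfl | rfl | rfl)
    · exact Ideal.subset_span (by simp)
    · exact Ideal.subset_span (by simp)
    · exact Ideal.mul_mem_right _ _ (Ideal.subset_span (by simp))

lemma one_notin_M : (1 : SqZero K) ∉ M K := by
  intro h
  rw [M, Submodule.mem_span_insert] at h
  obtain ⟨a, z, hz, h1⟩ := h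
  rw [Submodule.mem_span_insert] at hz
  obtain ⟨b, z', hz', h2⟩ := hz
  rw [Submodule.mem_span_singleton] at hz'
  obtain ⟨c, rfl⟩ := hz'
  have : (1 : K) • (1 : SqZero K) + (-a) • sqX K + (-b) • sqY K
      + (-c) • (sqX K * sqY K) = 0 := by
    rw [h1, h2]
    rw [one_smul, neg_smul, neg_smul, neg_smul]
    abel
  exact one_ne_zero ((indep K 1 (-a) (-b) (-c) this).1)

lemma gen_sq_x (s : K) : (sqX K + s • (sqX K * sqY K)) * (sqX K + s • (sqX K * sqY K)) = 0 := by
  have h : sqX K + s • (sqX K * sqY K) = sqX K * (1 + s • sqY K) := by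
    rw [mul_add, mul_one, mul_smul_comm]
  rw [h]
  have : sqX K * (1 + s • sqY K) * (sqX K * (1 + s • sqY K))
      = sqX K * sqX K * ((1 + s • sqY K) * (1 + s • sqY K)) := by ring
  rw [this, sq_x, zero_mul]

lemma gen_sq_y (t : K) : (sqY K + t • (sqX K * sqY K)) * (sqY K + t • (sqX K * sqY K)) = 0 := by
  have h : sqY K + t • (sqX K * sqY K) = sqY K * (1 + t • sqX K) := by
    rw [mul_add, mul_one, mul_smul_comm, mul_comm (sqY K) (sqX K)]
  rw [h]
  have : sqY K * (1 + t • sqX K) * (sqY K * (1 + t • sqX K))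
      = sqY K * sqY K * ((1 + t • sqX K) * (1 + t • sqX K)) := by ring
  rw [this, sq_y, zero_mul]

noncomputable def phiHom (s t : K) : SqZero K →ₐ[K] SqZero K :=
  mkHom K (sqX K + s • (sqX K * sqY K)) (sqY K + t • (sqX K * sqY K))
    (gen_sq_x K s) (gen_sq_y K t)

lemma phiHom_x (s t : K) : phiHom K s t (sqX K) = sqX K + s • (sqX K * sqY K) :=
  mkHom_x K _ _ _ _

lemma phiHom_y (s t : K) : phiHom K s t (sqY K) = sqY K + t • (sqX K * sqY K) :=
  mkHom_y K _ _ _ _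

lemma phiHom_xy (s t : K) : phiHom K s t (sqX K * sqY K) = sqX K * sqY K := by
  rw [map_mul, phiHom_x, phiHom_y, add_mul, mul_add, mul_add, smul_mul_assoc,
    mul_smul_comm, mul_smul_comm, smul_mul_assoc, x_mul_xy, xy_mul_y, xy_mul_xy,
    smul_zero, smul_zero, smul_zero, add_zero, add_zero, add_zero]

lemma phiHom_comp (s t s' t' : K) :
    (phiHom K s t).comp (phiHom K s' t') = phiHom K (s + s') (t + t') := by
  apply Ideal.Quotient.algHom_ext
  apply MvPolynomial.algHom_ext
  intro i
  fin_cases i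
  · show phiHom K s t (phiHom K s' t' (sqX K)) = phiHom K (s + s') (t + t') (sqX K)
    rw [phiHom_x, map_add, map_smul, phiHom_x, phiHom_xy, phiHom_x, add_smul, add_assoc]
  · show phiHom K s t (phiHom K s' t' (sqY K)) = phiHom K (s + s') (t + t') (sqY K)
    rw [phiHom_y, map_add, map_smul, phiHom_y, phiHom_xy, phiHom_y, add_smul, add_assoc]

lemma phiHom_zero : phiHom K 0 0 = AlgHom.id K (SqZero K) := by
  apply Ideal.Quotient.algHom_ext
  apply MvPolynomial.algHom_ext
  intro i
  fin_cases i
  · show phiHom K 0 0 (sqX K) = sqX K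
    rw [phiHom_x, zero_smul, add_zero]
  · show phiHom K 0 0 (sqY K) = sqY K
    rw [phiHom_y, zero_smul, add_zero]

noncomputable def phi (s t : K) : SqZero K ≃ₐ[K] SqZero K :=
  AlgEquiv.ofAlgHom (phiHom K s t) (phiHom K (-s) (-t))
    (by rw [phiHom_comp]; simpa using phiHom_zero K)
    (by rw [phiHom_comp]; simpa using phiHom_zero K)

lemma phi_apply (s t : K) (z : SqZero K) : phi K s t z = phiHom K s t z := rfl

lemma finite_sqzero : Module.Finite K (SqZero K) :=
  ⟨Submodule.fg_def.mpr ⟨_, Set.toFinite _, span_top K⟩⟩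

end P15

set_option synthInstance.maxHeartbeats 1000000 in
set_option maxHeartbeats 2000000 in
/-- Let `A = K[x,y]/(x², y²)` with maximal ideal `m = (x, y)`, and let
`W ⊆ m` be a 2-dimensional `K`-linear subspace that generates `A` as a unital `K`-algebra.
Then there exists a `K`-algebra automorphism `φ` of `A` such that `φ(W) = span{x, y}`. -/
theorem stmt_15 (K : Type*) [Field K] [IsAlgClosed K] [CharZero K]
    (W : Submodule K (SqZero K))
    (hWm : W ≤ (Ideal.span {sqX K, sqY K}).restrictScalars K)
    (hWdim : Module.finrank K W = 2)
    (hgen : Algebra.adjoin K (W : Set (SqZero K)) = ⊤) :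
    ∃ φ : SqZero K ≃ₐ[K] SqZero K,
      W.map φ.toLinearMap = Submodule.span K {sqX K, sqY K} := by
  classical
  have hFD : Module.Finite K (SqZero K) := P15.finite_sqzero K
  -- W is inside the span of x, y, xy
  have hWM : W ≤ P15.M K := by rw [← P15.ideal_eq]; exact hWm
  -- the submodule K·1 + K·xy + W
  set T : Submodule K (SqZero K) :=
    Submodule.span K ({1, sqX K * sqY K} ∪ (W : Set (SqZero K))) with hTdef
  have hxyT : sqX K * sqY K ∈ T := Submodule.subset_span (Or.inl (Or.inr rfl))
  have hJT : P15.J K ≤ T := Submodule.span_le.2 (by rintro v rfl; exact hxyT)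
  have hmulT : ∀ a b : SqZero K, a ∈ T → b ∈ T → a * b ∈ T := by
    have : T * T ≤ T := by
      rw [hTdef, Submodule.span_mul_span, Submodule.span_le]
      rintro z hz
      rw [Set.mem_mul] at hz
      obtain ⟨p, hp, q, hq, rfl⟩ := hz
      rw [Set.mem_union, Set.mem_insert_iff, Set.mem_singleton_iff] at hp hq
      rcases hp with (rfl | rfl) | hp
      · rw [one_mul]
        rcases hq with (rfl | rfl) | hq
        · exact Submodule.subset_span (Or.inl (Or.inl rfl))
        · exact hxyT
        · exact Submodule.subset_span (Or.inr hq)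
      · rcases hq with (rfl | rfl) | hq
        · rw [mul_one]; exact hxyT
        · rw [P15.xy_mul_xy]; exact T.zero_mem
        · rw [P15.xy_mul_M K (hWM hq)]; exact T.zero_mem
      · rcases hq with (rfl | rfl) | hq
        · rw [mul_one]; exact Submodule.subset_span (Or.inr hp)
        · rw [mul_comm p (sqX K * sqY K), P15.xy_mul_M K (hWM hp)]; exact T.zero_mem
        · exact hJT (P15.M_mul_M K (hWM hp) (hWM hq))
    intro a b ha hb
    exact this (Submodule.mul_mem_mul ha hb)
  have honeT : (1 : SqZero K) ∈ T := Submodule.subset_span (Or.inl (Or.inl rfl))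
  -- T is all of A
  have hTtop : ∀ z : SqZero K, z ∈ T := by
    intro z
    have h1 : Algebra.adjoin K (W : Set (SqZero K)) ≤
        Submodule.toSubalgebra T honeT hmulT :=
      Algebra.adjoin_le (fun w hw => Submodule.subset_span (Or.inr hw))
    rw [hgen] at h1
    exact h1 trivial
  -- extract u = x - b·xy ∈ W and v = y - c·xy ∈ W
  have extract : ∀ z : SqZero K, z ∈ P15.M K → ∃ b : K, z - b • (sqX K * sqY K) ∈ W := by
    intro z hzM
    have hz : z ∈ Submodule.span K ({1, sqX K * sqY K} : Set (SqZero K)) ⊔ W := by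
      rw [← Submodule.span_eq W, ← Submodule.span_union, ← hTdef]
      exact hTtop z
    rw [Submodule.mem_sup] at hz
    obtain ⟨p, hp, w, hw, hzpw⟩ := hz
    rw [Submodule.mem_span_pair] at hp
    obtain ⟨a, b, rfl⟩ := hp
    -- show a = 0
    have haM : a • (1 : SqZero K) ∈ P15.M K := by
      have : a • (1 : SqZero K) = z - b • (sqX K * sqY K) - w := by
        rw [← hzpw]; abel
      rw [this]
      exact Submodule.sub_mem _ (Submodule.sub_mem _ hzM
        (Submodule.smul_mem _ b (Submodule.subset_span (by simp)))) (hWM hw)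
    have ha : a = 0 := by
      by_contra ha
      apply P15.one_notin_M K
      have := Submodule.smul_mem (P15.M K) a⁻¹ haM
      rwa [smul_smul, inv_mul_cancel₀ ha, one_smul] at this
    refine ⟨b, ?_⟩
    have : z - b • (sqX K * sqY K) = w := by
      rw [← hzpw, ha, zero_smul, zero_add]; abel
    rw [this]; exact hw
  obtain ⟨b, hbW⟩ := extract (sqX K) (Submodule.subset_span (by simp))
  obtain ⟨c, hcW⟩ := extract (sqY K) (Submodule.subset_span (by simp))
  set u := sqX K - b • (sqX K * sqY K) with hu
  set v := sqY K - c • (sqX K * sqY K) with hv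
  -- u, v are linearly independent
  have hli : LinearIndependent K ![u, v] := by
    rw [LinearIndependent.pair_iff]
    intro s t hst
    have h0 : (0 : K) • (1 : SqZero K) + s • sqX K + t • sqY K
        + (-(s * b) - t * c) • (sqX K * sqY K) = 0 := by
      rw [← hst, hu, hv]
      rw [smul_sub, smul_sub, smul_smul, smul_smul, zero_smul, sub_smul, neg_smul]
      abel
    have := P15.indep K 0 s t _ h0
    exact ⟨this.2.1, this.2.2.1⟩
  -- W = span {u, v}
  have hrange : Set.range ![u, v] = {u, v} := by
    simp [Matrix.range_cons, Matrix.range_empty, Set.insert_union, Set.pair_comm]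
  have hWspan : Submodule.span K {u, v} = W := by
    apply Submodule.eq_of_le_of_finrank_le
    · rw [Submodule.span_le]
      rintro z (rfl | rfl)
      · exact hbW
      · exact hcW
    · rw [hWdim, ← hrange, finrank_span_eq_card hli]
      simp
  -- the automorphism
  refine ⟨P15.phi K b c, ?_⟩
  have hphiu : (P15.phi K b c) u = sqX K := by
    rw [P15.phi_apply, hu, map_sub, map_smul, P15.phiHom_x, P15.phiHom_xy]
    abel
  have hphiv : (P15.phi K b c) v = sqY K := by
    rw [P15.phi_apply, hv, map_sub, map_smul, P15.phiHom_y, P15.phiHom_xy]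
    abel
  rw [← hWspan, Submodule.map_span]
  congr 1
  rw [Set.image_insert_eq, Set.image_singleton]
  simp only [AlgEquiv.toLinearMap_apply, hphiu, hphiv]
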